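/- Let f be holomorphic on {|z| ≤ R} with |f(z)| ≤ M, f(0) = 0, and f'(0) = c > 0. Set r₀ = min{R/2, cR²/(16M)}. Then for every r ≤ r₀ and every z with |z| < r, one has |f'(z)| ≥ c/2. -/

import Mathlib

open Metric
open Set Topology

theorem stmt_8 (R M c : ℝ) (hR : 0 < R) (hM : 0 < M) (hc : 0 < c)
    (f : ℂ → ℂ) (hf : DifferentiableOn ℂ f (closedBall (0:ℂ) R))
    (hbound : ∀ z ∈ closedBall (0:ℂ) R, ‖f z‖ ≤ M)
    (hf0 : f 0 = 0) (hf' : deriv f 0 = (c : ℂ)) :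
    ∀ r : ℝ, 0 < r → r ≤ min (R / 2) (c * R ^ 2 / (16 * M)) →
      ∀ z ∈ ball (0:ℂ) r, c / 2 ≤ ‖deriv f z‖ := by
  intro r hr hrle z hz
  have hrR : r ≤ R / 2 := hrle.trans (min_le_left _ _)
  have hrc : r ≤ c * R ^ 2 / (16 * M) := hrle.trans (min_le_right _ _)
  have hzr : ‖z‖ < r := by simpa [mem_ball, dist_eq_norm] using hz
  have hball : closedBall (0:ℂ) R ∈ 𝓝 (0:ℂ) := closedBall_mem_nhds _ hR
  have hnc : ‖(c:ℂ)‖ = c := by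
    rw [Complex.norm_real, Real.norm_eq_abs, abs_of_pos hc]
  -- maximum modulus principle helper
  have key : ∀ (u : ℂ → ℂ) (C : ℝ), DifferentiableOn ℂ u (closedBall (0:ℂ) R) →
      (∀ w : ℂ, ‖w‖ = R → ‖u w‖ ≤ C) → ∀ w ∈ closedBall (0:ℂ) R, ‖u w‖ ≤ C := by
    intro u C hu hC w hw
    refine Complex.norm_le_of_forall_mem_frontier_norm_le isBounded_ball
      (DifferentiableOn.diffContOnCl (by rwa [closure_ball _ hR.ne'])) ?_ ?_
    · rw [frontier_ball _ hR.ne']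
      intro x hx
      exact hC x (by simpa [mem_sphere_iff_norm] using hx)
    · rwa [closure_ball _ hR.ne']
  -- Schwarz at 0 : c * R ≤ M
  have hcM : c * R ≤ M := by
    have hu : DifferentiableOn ℂ (dslope f 0) (closedBall (0:ℂ) R) :=
      (Complex.differentiableOn_dslope hball).mpr hf
    have hb : ∀ w : ℂ, ‖w‖ = R → ‖dslope f 0 w‖ ≤ M / R := by
      intro w hw
      have hw0 : w ≠ 0 := by
        intro h; rw [h] at hw; simp at hw; exact hR.ne' hw.symm
      rw [dslope_of_ne _ hw0, slope_def_field, hf0]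
      have hfw : ‖f w‖ ≤ M := hbound w (mem_closedBall_zero_iff.mpr hw.le)
      rw [sub_zero, sub_zero, norm_div, hw]
      gcongr
    have h0 : ‖dslope f 0 0‖ ≤ M / R :=
      key _ _ hu hb 0 (mem_closedBall_zero_iff.mpr (by simpa using hR.le))
    rw [dslope_same, hf', hnc] at h0
    calc c * R ≤ (M / R) * R := by nlinarith
    _ = M := by field_simp
  -- the function g with a double zero
  set g : ℂ → ℂ := fun w => f w - c * w with hg_def
  have hg_diff : DifferentiableOn ℂ g (closedBall (0:ℂ) R) := by
    apply hf.sub; fun_prop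
  have hfd0 : DifferentiableAt ℂ f 0 := hf.differentiableAt hball
  have hg'0 : deriv g 0 = 0 := by
    have h1 : HasDerivAt (fun w : ℂ => (c:ℂ) * w) c 0 := by
      simpa using (hasDerivAt_id (0:ℂ)).const_mul (c:ℂ)
    have h2 : HasDerivAt g ((c:ℂ) - c) 0 := by
      have := hfd0.hasDerivAt.sub h1
      rw [hf'] at this
      exact this
    simpa using h2.deriv
  have hg0 : g 0 = 0 := by simp [hg_def, hf0]
  set h1 : ℂ → ℂ := dslope g 0 with hh1_def
  set h : ℂ → ℂ := dslope h1 0 with hh_def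
  have hh1_diff : DifferentiableOn ℂ h1 (closedBall (0:ℂ) R) :=
    (Complex.differentiableOn_dslope hball).mpr hg_diff
  have hh_diff : DifferentiableOn ℂ h (closedBall (0:ℂ) R) :=
    (Complex.differentiableOn_dslope hball).mpr hh1_diff
  have h10 : h1 0 = 0 := by rw [hh1_def, dslope_same, hg'0]
  -- the identity g w = w^2 * h w
  have hident : ∀ w : ℂ, g w = w ^ 2 * h w := by
    intro w
    rcases eq_or_ne w 0 with rfl | hw0
    · simp [hg0]
    · rw [hh_def, dslope_of_ne _ hw0, slope_def_field, h10, hh1_def,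
        dslope_of_ne _ hw0, slope_def_field, hg0]
      field_simp
      ring
  -- bound on h
  have hhb : ∀ w ∈ closedBall (0:ℂ) R, ‖h w‖ ≤ 2 * M / R ^ 2 := by
    refine key _ _ hh_diff ?_
    intro w hw
    have hgw : ‖g w‖ ≤ 2 * M := by
      have hfw : ‖f w‖ ≤ M := hbound w (mem_closedBall_zero_iff.mpr hw.le)
      calc ‖g w‖ ≤ ‖f w‖ + ‖(c:ℂ) * w‖ := norm_sub_le _ _
      _ ≤ M + c * R := by rw [norm_mul, hw, hnc]; linarith
      _ ≤ 2 * M := by linarith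
    have hkey : ‖w ^ 2 * h w‖ ≤ 2 * M := by rw [← hident w]; exact hgw
    rw [norm_mul, norm_pow, hw] at hkey
    rw [le_div_iff₀ (by positivity)]
    nlinarith [hkey]
  -- bound on deriv h at z
  have hRr : 0 < R - r := by linarith
  have hzball : z ∈ closedBall (0:ℂ) R := by
    rw [mem_closedBall_zero_iff]; linarith
  have hsub : ball z (R - r) ⊆ closedBall (0:ℂ) R := by
    intro w hw
    simp only [mem_ball, dist_eq_norm] at hw
    rw [mem_closedBall_zero_iff]
    calc ‖w‖ = ‖(w - z) + z‖ := by ring_nf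
    _ ≤ ‖w - z‖ + ‖z‖ := norm_add_le _ _
    _ ≤ R := by linarith
  have hderivh : ‖deriv h z‖ ≤ 4 * M / R ^ 2 / (R - r) := by
    have main : ∀ ε > 0, ‖deriv h z‖ ≤ (4 * M / R ^ 2 + ε) / (R - r) := by
      intro ε hε
      have hmaps : MapsTo h (ball z (R - r)) (ball (h z) (4 * M / R ^ 2 + ε)) := by
        intro w hw
        simp only [mem_ball, dist_eq_norm]
        have hb1 : ‖h w‖ ≤ 2 * M / R ^ 2 := hhb w (hsub hw)
        have hb2 : ‖h z‖ ≤ 2 * M / R ^ 2 := hhb z hzball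
        calc ‖h w - h z‖ ≤ ‖h w‖ + ‖h z‖ := norm_sub_le _ _
        _ < 4 * M / R ^ 2 + ε := by
            have : 2 * M / R ^ 2 + 2 * M / R ^ 2 = 4 * M / R ^ 2 := by ring
            linarith
      exact Complex.norm_deriv_le_div_of_mapsTo_ball (hh_diff.mono hsub) (hmaps.mono_right ball_subset_closedBall) hRr
    have h2 : ‖deriv h z‖ * (R - r) ≤ 4 * M / R ^ 2 := by
      refine le_of_forall_pos_le_add fun ε hε => ?_
      have := main ε hε
      rw [le_div_iff₀ hRr] at this
      linarith
    rwa [le_div_iff₀ hRr]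
  -- derivative formula at z
  have hnhds : closedBall (0:ℂ) R ∈ 𝓝 z := by
    refine Filter.mem_of_superset (isOpen_ball.mem_nhds ?_) ball_subset_closedBall
    rw [mem_ball_zero_iff]; linarith
  have hhz : DifferentiableAt ℂ h z := hh_diff.differentiableAt hnhds
  have Hg : HasDerivAt g (2 * z * h z + z ^ 2 * deriv h z) z := by
    have hp : HasDerivAt (fun w : ℂ => w ^ 2) (2 * z) z := by
      simpa using hasDerivAt_pow 2 z
    have hmul := hp.mul hhz.hasDerivAt
    have hgf : g = fun w => w ^ 2 * h w := funext hident
    rw [hgf]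
    exact hmul
  have Hf : HasDerivAt f ((c:ℂ) + (2 * z * h z + z ^ 2 * deriv h z)) z := by
    have hlin : HasDerivAt (fun w : ℂ => (c:ℂ) * w) c z := by
      simpa using (hasDerivAt_id z).const_mul (c:ℂ)
    have hsum := hlin.add Hg
    have : (fun w : ℂ => (c:ℂ) * w + g w) = f := by
      funext w; simp [hg_def]
    rw [← this]; exact hsum
  rw [Hf.deriv]
  -- final estimates
  set E : ℂ := 2 * z * h z + z ^ 2 * deriv h z with hE_def
  have h16 : r * (16 * M) ≤ c * R ^ 2 := by
    rwa [le_div_iff₀ (by positivity)] at hrc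
  have hBb : ‖deriv h z‖ ≤ 8 * M / R ^ 3 := by
    have hhalf : R / 2 ≤ R - r := by linarith
    calc ‖deriv h z‖ ≤ 4 * M / R ^ 2 / (R - r) := hderivh
    _ ≤ 4 * M / R ^ 2 / (R / 2) := by gcongr
    _ = 8 * M / R ^ 3 := by field_simp; ring
  have hA : ‖h z‖ ≤ 2 * M / R ^ 2 := hhb z hzball
  have hEb : ‖E‖ ≤ c / 2 := by
    have step1 : ‖E‖ ≤ 2 * ‖z‖ * ‖h z‖ + ‖z‖ ^ 2 * ‖deriv h z‖ := by
      calc ‖E‖ ≤ ‖2 * z * h z‖ + ‖z ^ 2 * deriv h z‖ := norm_add_le _ _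
      _ = 2 * ‖z‖ * ‖h z‖ + ‖z‖ ^ 2 * ‖deriv h z‖ := by
          simp [norm_mul, norm_pow]
    have step2 : 2 * ‖z‖ * ‖h z‖ + ‖z‖ ^ 2 * ‖deriv h z‖ ≤
        2 * r * (2 * M / R ^ 2) + r ^ 2 * (8 * M / R ^ 3) := by
      have hz' : ‖z‖ ≤ r := hzr.le
      gcongr
    have step3 : 2 * r * (2 * M / R ^ 2) + r ^ 2 * (8 * M / R ^ 3) ≤ c / 2 := by
      have heq : 2 * r * (2 * M / R ^ 2) + r ^ 2 * (8 * M / R ^ 3)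
          = (4 * M * r * R + 8 * M * r ^ 2) / R ^ 3 := by field_simp; ring
      rw [heq, div_le_iff₀ (by positivity)]
      nlinarith [mul_le_mul_of_nonneg_right h16 hR.le,
        mul_le_mul_of_nonneg_left (by linarith : 2 * r ≤ R) (by positivity : (0:ℝ) ≤ 4 * M * r)]
    linarith
  have htri : ‖(c:ℂ)‖ ≤ ‖(c:ℂ) + E‖ + ‖E‖ := by
    calc ‖(c:ℂ)‖ = ‖((c:ℂ) + E) - E‖ := by ring_nf
    _ ≤ ‖(c:ℂ) + E‖ + ‖E‖ := norm_sub_le _ _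
  rw [hnc] at htri
  linarith
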